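/- Let K be a Killing field on ℝ³ and let (u,p) be a smooth solution of the incompressible Euler equations on I × ℝ³ with [K, u(t,·)] = 0 for every t ∈ I, and suppose that for each t ∈ I the function ⟨∇ₓp(t,x), K(x)⟩ tends to 0 as |x| → ∞. Let γ : I × ℝ³ → ℝ³ be a flow of u, i.e. ∂ₜγ(t,x) = u(t, γ(t,x)) and γ(0,x) = x. Then the swirl is transported by the flow: ⟨u(t, γ(t,x)), K(γ(t,x))⟩ = ⟨u(0,x), K(x)⟩ for all t ∈ I and x ∈ ℝ³. -/

import Mathlib

noncomputable section

/-- Vectors in ℝ³. -/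
abbrev V3 : Type := Fin 3 → ℝ

/-- Euclidean inner product on ℝ³. -/
def dot3 (u v : V3) : ℝ := ∑ i, u i * v i

/-- Cross product on ℝ³. -/
def cross3 (u v : V3) : V3 :=
  ![u 1 * v 2 - u 2 * v 1, u 2 * v 0 - u 0 * v 2, u 0 * v 1 - u 1 * v 0]

/-- Partial derivative ∂ᵢ of a scalar function. -/
def pd (i : Fin 3) (f : V3 → ℝ) (x : V3) : ℝ := fderiv ℝ f x (Pi.single i 1)

/-- Gradient of a scalar function. -/
def grad3 (f : V3 → ℝ) (x : V3) : V3 := fun i => pd i f x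

/-- Divergence of a vector field. -/
def div3 (X : V3 → V3) (x : V3) : ℝ := ∑ i, fderiv ℝ X x (Pi.single i 1) i

/-- Curl of a vector field. -/
def curl3 (X : V3 → V3) (x : V3) : V3 :=
  ![pd 1 (fun y => X y 2) x - pd 2 (fun y => X y 1) x,
    pd 2 (fun y => X y 0) x - pd 0 (fun y => X y 2) x,
    pd 0 (fun y => X y 1) x - pd 1 (fun y => X y 0) x]

/-- Lie bracket of vector fields: [X,Y](x) = DY(x)X(x) − DX(x)Y(x). -/
def bracket3 (X Y : V3 → V3) (x : V3) : V3 := fderiv ℝ Y x (X x) - fderiv ℝ X x (Y x)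

/-- `K` is a Killing field of the Euclidean metric on `U`: `DK(x)` is antisymmetric on `U`. -/
def IsKillingOn (K : V3 → V3) (U : Set V3) : Prop :=
  ∀ x ∈ U, ∀ v w : V3, dot3 (fderiv ℝ K x v) w + dot3 v (fderiv ℝ K x w) = 0

/-- `(u,p)` solves the incompressible Euler equations on `I × ℝ³`:
∂ₜu + (Dₓu)u = −∇ₓp and divₓ u = 0. -/
def IsEulerSolution (I : Set ℝ) (u : ℝ → V3 → V3) (p : ℝ → V3 → ℝ) : Prop :=
  (∀ t ∈ I, ∀ x : V3, deriv (fun s => u s x) t + fderiv ℝ (u t) x (u t x)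
      = -grad3 (p t) x) ∧
  (∀ t ∈ I, ∀ x : V3, div3 (u t) x = 0)

open Filter Set ContinuousLinearMap

lemma dot3_comm (a b : V3) : dot3 a b = dot3 b a := by
  unfold dot3; exact Finset.sum_congr rfl fun i _ => mul_comm _ _

lemma dot3_neg_left (a b : V3) : dot3 (-a) b = -dot3 a b := by
  unfold dot3; rw [← Finset.sum_neg_distrib]; exact Finset.sum_congr rfl fun i _ => by simp

lemma dot3_single (a : V3) (i : Fin 3) : dot3 a (Pi.single i 1) = a i := by
  unfold dot3
  rw [Finset.sum_eq_single i] <;> simp +contextual [Pi.single_apply]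

lemma expand_single (w : V3) : ∑ i, w i • (Pi.single i 1 : V3) = w := by
  funext j
  simp [Finset.sum_apply, Pi.single_apply]

lemma clm_expand {E : Type*} [NormedAddCommGroup E] [NormedSpace ℝ E]
    (L : V3 →L[ℝ] E) (w : V3) : L w = ∑ i, w i • L (Pi.single i 1) := by
  conv_lhs => rw [← expand_single w]
  rw [map_sum]
  exact Finset.sum_congr rfl fun i _ => by rw [map_smul]

lemma eq_of_dot3_zero (a : V3) (h : ∀ z, dot3 a z = 0) : a = 0 := by
  funext i
  have := h (Pi.single i 1)
  rw [dot3_single] at this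
  simpa using this

lemma hasFDerivAt_dot3 {E : Type*} [NormedAddCommGroup E] [NormedSpace ℝ E]
    {A B : E → V3} {A' B' : E →L[ℝ] V3} {x : E}
    (hA : HasFDerivAt A A' x) (hB : HasFDerivAt B B' x) :
    HasFDerivAt (fun y => dot3 (A y) (B y))
      (∑ i : Fin 3, ((A x i) • ((proj i : V3 →L[ℝ] ℝ).comp B')
        + (B x i) • ((proj i : V3 →L[ℝ] ℝ).comp A'))) x := by
  have : ∀ i : Fin 3, HasFDerivAt (fun y => A y i * B y i)
      ((A x i) • ((proj i : V3 →L[ℝ] ℝ).comp B') + (B x i) • ((proj i : V3 →L[ℝ] ℝ).comp A')) x := by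
    intro i
    have hAi : HasFDerivAt (fun y => A y i) ((proj i : V3 →L[ℝ] ℝ).comp A') x :=
      (proj i : V3 →L[ℝ] ℝ).hasFDerivAt.comp x hA
    have hBi : HasFDerivAt (fun y => B y i) ((proj i : V3 →L[ℝ] ℝ).comp B') x :=
      (proj i : V3 →L[ℝ] ℝ).hasFDerivAt.comp x hB
    simpa using hAi.fun_mul hBi
  exact HasFDerivAt.fun_sum (fun i _ => this i)

lemma dot3_deriv_apply {E : Type*} [NormedAddCommGroup E] [NormedSpace ℝ E]
    (A B : E → V3) (A' B' : E →L[ℝ] V3) (x : E) (v : E) :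
    (∑ i : Fin 3, ((A x i) • ((proj i : V3 →L[ℝ] ℝ).comp B')
        + (B x i) • ((proj i : V3 →L[ℝ] ℝ).comp A'))) v
      = dot3 (A' v) (B x) + dot3 (A x) (B' v) := by
  simp [dot3, Finset.sum_add_distrib, mul_comm, add_comm]

lemma hasDerivAt_dot3 {A B : ℝ → V3} {a b : V3} {t : ℝ}
    (hA : HasDerivAt A a t) (hB : HasDerivAt B b t) :
    HasDerivAt (fun s => dot3 (A s) (B s)) (dot3 a (B t) + dot3 (A t) b) t := by
  have : ∀ i : Fin 3, HasDerivAt (fun s => A s i * B s i)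
      (a i * B t i + A t i * b i) t := by
    intro i
    have hAi : HasDerivAt (fun s => A s i) (a i) t := by
      simpa [Function.comp_def] using (proj i : V3 →L[ℝ] ℝ).hasFDerivAt.comp_hasDerivAt t hA
    have hBi : HasDerivAt (fun s => B s i) (b i) t := by
      simpa [Function.comp_def] using (proj i : V3 →L[ℝ] ℝ).hasFDerivAt.comp_hasDerivAt t hB
    exact hAi.mul hBi
  have := HasDerivAt.fun_sum (fun i (_ : i ∈ Finset.univ) => this i)
  have h2 : dot3 a (B t) + dot3 (A t) b = ∑ i, (a i * B t i + A t i * b i) := by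
    simp [dot3, Finset.sum_add_distrib]
  rw [h2]
  exact this

lemma killing_dot (K : V3 → V3) (hKill : IsKillingOn K Set.univ) (x v w : V3) :
    dot3 (fderiv ℝ K x v) w = - dot3 v (fderiv ℝ K x w) := by
  have := hKill x (mem_univ x) v w; linarith

lemma coe2top : (2 : WithTop ℕ∞) ≤ ((⊤:ℕ∞) : WithTop ℕ∞) := by
  rw [show ((2:WithTop ℕ∞)) = ((2:ℕ∞):WithTop ℕ∞) from rfl]
  exact WithTop.coe_le_coe.mpr le_top

lemma coe1top : (1 : WithTop ℕ∞) ≤ ((⊤:ℕ∞) : WithTop ℕ∞) := by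
  rw [show ((1:WithTop ℕ∞)) = ((1:ℕ∞):WithTop ℕ∞) from rfl]
  exact WithTop.coe_le_coe.mpr le_top

lemma coe11top : (1 : WithTop ℕ∞) + 1 ≤ ((⊤:ℕ∞) : WithTop ℕ∞) := by
  rw [show ((1:WithTop ℕ∞)+1) = ((2:ℕ∞):WithTop ℕ∞) from rfl]
  exact WithTop.coe_le_coe.mpr le_top

lemma killing_snd_fderiv_zero (K : V3 → V3) (hK : ContDiff ℝ (⊤ : ℕ∞) K)
    (hKill : IsKillingOn K Set.univ) (x : V3) :
    fderiv ℝ (fderiv ℝ K) x = 0 := by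
  set H := fderiv ℝ (fderiv ℝ K) x with hH
  have hK1 : ContDiff ℝ ((1 : ℕ∞) : WithTop ℕ∞) (fderiv ℝ K) :=
    hK.fderiv_right coe11top
  have hDK : HasFDerivAt (fderiv ℝ K) H x :=
    ((hK1.differentiable one_ne_zero) x).hasFDerivAt
  have hKder : ∀ y, HasFDerivAt K (fderiv ℝ K y) y := fun y =>
    ((hK.differentiable (by simp)) y).hasFDerivAt
  have hsymm : ∀ v w, H v w = H w v := by
    intro v w
    exact (hK.contDiffAt.isSymmSndFDerivAt (by rw [minSmoothness_of_isRCLikeNormedField]; exact coe2top)) v w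
  -- antisymmetry
  have hanti : ∀ v w z, dot3 (H v w) z + dot3 w (H v z) = 0 := by
    intro v w z
    -- derivative of the zero function y ↦ dot3 (DK(y) w) z + dot3 w (DK(y) z)
    have hw : HasFDerivAt (fun y => fderiv ℝ K y w)
        ((fderiv ℝ K x).comp (0 : V3 →L[ℝ] V3) + H.flip w) x :=
      hDK.clm_apply (hasFDerivAt_const w x)
    have hz : HasFDerivAt (fun y => fderiv ℝ K y z)
        ((fderiv ℝ K x).comp (0 : V3 →L[ℝ] V3) + H.flip z) x :=
      hDK.clm_apply (hasFDerivAt_const z x)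
    have h1 := hasFDerivAt_dot3 (B := fun _ => z) (B' := 0) hw (hasFDerivAt_const z x)
    have h2 := hasFDerivAt_dot3 (A := fun _ => w) (A' := 0) (hasFDerivAt_const w x) hz
    have hsum := h1.add h2
    have hzero : HasFDerivAt (fun y : V3 =>
        dot3 (fderiv ℝ K y w) z + dot3 w (fderiv ℝ K y z)) (0 : V3 →L[ℝ] ℝ) x := by
      have : (fun y : V3 => dot3 (fderiv ℝ K y w) z + dot3 w (fderiv ℝ K y z))
          = fun _ => (0:ℝ) := funext fun y => hKill y (mem_univ y) w z
      rw [this]; exact hasFDerivAt_const 0 x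
    have huniq := hsum.unique hzero
    have hv := congrArg (fun L : V3 →L[ℝ] ℝ => L v) huniq
    simp only [ContinuousLinearMap.sum_apply, ContinuousLinearMap.add_apply,
      ContinuousLinearMap.smul_apply, ContinuousLinearMap.comp_apply,
      ContinuousLinearMap.proj_apply, ContinuousLinearMap.zero_apply,
      ContinuousLinearMap.flip_apply, smul_eq_mul, mul_zero, zero_add, add_zero,
      zero_mul, map_zero, Pi.zero_apply, Pi.add_apply, Finset.sum_const_zero,
      Finset.sum_add_distrib] at hv
    simp only [dot3]
    have hc : ∑ i, (H v) w i * z i = ∑ i, z i * (H v) w i :=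
      Finset.sum_congr rfl fun i _ => mul_comm _ _
    rw [hc]
    exact hv
  have e1 : ∀ a b c : V3, dot3 (H a b) c = - dot3 (H a c) b := by
    intro a b c
    have h := hanti a b c
    rw [dot3_comm b (H a c)] at h; linarith
  have key : ∀ v w z, dot3 (H v w) z = 0 := by
    intro v w z
    have hcyc : dot3 (H v w) z = - dot3 (H v w) z := by
      calc dot3 (H v w) z = - dot3 (H v z) w := e1 v w z
        _ = - dot3 (H z v) w := by rw [hsymm v z]
        _ = dot3 (H z w) v := by rw [e1 z v w]; ring
        _ = dot3 (H w z) v := by rw [hsymm z w]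
        _ = - dot3 (H w v) z := e1 w z v
        _ = - dot3 (H v w) z := by rw [hsymm w v]
    linarith
  have hvw : ∀ v w, H v w = 0 := fun v w => eq_of_dot3_zero _ (key v w)
  refine ContinuousLinearMap.ext fun v => ContinuousLinearMap.ext fun w => ?_
  simp [hvw v w]

lemma dot3_deriv_apply' {E : Type*} [NormedAddCommGroup E] [NormedSpace ℝ E]
    (a b : V3) (A' B' : E →L[ℝ] V3) (v : E) :
    (∑ i : Fin 3, ((a i) • ((proj i : V3 →L[ℝ] ℝ).comp B')
        + (b i) • ((proj i : V3 →L[ℝ] ℝ).comp A'))) v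
      = dot3 (A' v) b + dot3 a (B' v) := by
  simp [dot3, Finset.sum_add_distrib, mul_comm, add_comm]

lemma grad_p_swirl_zero (I : Set ℝ) (hIopen : IsOpen I)
    (K : V3 → V3) (hKsmooth : ContDiff ℝ (⊤ : ℕ∞) K) (hKill : IsKillingOn K Set.univ)
    (u : ℝ → V3 → V3) (p : ℝ → V3 → ℝ)
    (hu : ContDiffOn ℝ (⊤ : ℕ∞) (fun q : ℝ × V3 => u q.1 q.2) (I ×ˢ (Set.univ : Set V3)))
    (hp : ContDiffOn ℝ (⊤ : ℕ∞) (fun q : ℝ × V3 => p q.1 q.2) (I ×ˢ (Set.univ : Set V3)))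
    (heuler : IsEulerSolution I u p)
    (haxi : ∀ t ∈ I, ∀ x : V3, bracket3 K (u t) x = 0)
    (hdecay : ∀ t ∈ I, Filter.Tendsto (fun x : V3 => dot3 (grad3 (p t) x) (K x))
      (Filter.cocompact V3) (nhds 0)) :
    ∀ s ∈ I, ∀ y : V3, dot3 (grad3 (p s) y) (K y) = 0 := by
  intro s hs
  set F : ℝ × V3 → V3 := fun q => u q.1 q.2 with hFdef
  have hUopen : IsOpen (I ×ˢ (univ : Set V3)) := hIopen.prod isOpen_univ
  have hFq : ∀ q : ℝ × V3, q.1 ∈ I → ContDiffAt ℝ ((⊤:ℕ∞) : WithTop ℕ∞) F q := fun q hq =>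
    hu.contDiffAt (hUopen.mem_nhds ⟨hq, trivial⟩)
  have hKder : ∀ y, HasFDerivAt K (fderiv ℝ K y) y := fun y =>
    ((hKsmooth.differentiable (by simp)) y).hasFDerivAt
  have hK1 : ContDiff ℝ ((1:ℕ∞) : WithTop ℕ∞) (fderiv ℝ K) := hKsmooth.fderiv_right coe11top
  have hDK0 : ∀ y, HasFDerivAt (fderiv ℝ K) (0 : V3 →L[ℝ] V3 →L[ℝ] V3) y := by
    intro y
    have h := ((hK1.differentiable one_ne_zero) y).hasFDerivAt
    rwa [killing_snd_fderiv_zero K hKsmooth hKill y] at h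
  have hι : ∀ (r : ℝ) (y : V3), HasFDerivAt (fun z : V3 => ((r, z) : ℝ × V3))
      ((0 : V3 →L[ℝ] ℝ).prod (ContinuousLinearMap.id ℝ V3)) y := fun r y =>
    (hasFDerivAt_const r y).prodMk (hasFDerivAt_id y)
  have hUder : ∀ r ∈ I, ∀ y : V3, HasFDerivAt (u r)
      ((fderiv ℝ F (r, y)).comp ((0 : V3 →L[ℝ] ℝ).prod (ContinuousLinearMap.id ℝ V3))) y := by
    intro r hr y
    have h := (((hFq (r, y) hr).differentiableAt (by simp)).hasFDerivAt).comp y (hι r y)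
    simpa [Function.comp] using h
  have hux : ∀ r ∈ I, ∀ (y v : V3), fderiv ℝ (u r) y v = fderiv ℝ F (r, y) (0, v) := by
    intro r hr y v
    rw [(hUder r hr y).fderiv]
    simp
  have hder_t : ∀ y : V3, HasDerivAt (fun r => u r y) (fderiv ℝ F (s, y) (1, 0)) s := by
    intro y
    have h := ((hFq (s, y) hs).differentiableAt (by simp)).hasFDerivAt.comp_hasDerivAt s
      ((hasDerivAt_id s).prodMk (hasDerivAt_const s y))
    simpa [Function.comp_def] using h
  have heul : ∀ y : V3, grad3 (p s) y = -(fderiv ℝ F (s, y) ((1:ℝ), u s y)) := by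
    intro y
    have h := heuler.1 s hs y
    rw [(hder_t y).deriv, hux s hs y (u s y)] at h
    have hsum : fderiv ℝ F (s, y) ((1:ℝ), (0:V3)) + fderiv ℝ F (s, y) ((0:ℝ), u s y)
        = fderiv ℝ F (s, y) ((1:ℝ), u s y) := by
      rw [← ContinuousLinearMap.map_add]
      norm_num
    rw [hsum] at h
    rw [h, neg_neg]
  -- main step: the gradient of the swirl of the pressure gradient vanishes
  have hg0 : ∀ x' : V3, HasFDerivAt (fun y => dot3 (grad3 (p s) y) (K y))
      (0 : V3 →L[ℝ] ℝ) x' := by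
    intro x'
    have hS : HasFDerivAt (fderiv ℝ F) (fderiv ℝ (fderiv ℝ F) (s, x')) ((s, x') : ℝ × V3) :=
      (((hFq (s, x') hs).fderiv_right coe11top).differentiableAt one_ne_zero).hasFDerivAt
    set S := fderiv ℝ (fderiv ℝ F) ((s, x') : ℝ × V3) with hSdef
    have hSsymm : ∀ a b, S a b = S b a := (hFq (s, x') hs).isSymmSndFDerivAt (by rw [minSmoothness_of_isRCLikeNormedField]; exact coe2top)
    have hFd : HasFDerivAt F (fderiv ℝ F ((s, x') : ℝ × V3)) ((s, x') : ℝ × V3) :=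
      ((hFq (s, x') hs).differentiableAt (by simp)).hasFDerivAt
    -- Lie bracket of K with the acceleration field vanishes
    have hm : HasFDerivAt (fun q : ℝ × V3 => (((0:ℝ), K q.2) : ℝ × V3))
        ((0 : (ℝ × V3) →L[ℝ] ℝ).prod ((fderiv ℝ K x').comp (ContinuousLinearMap.snd ℝ ℝ V3)))
        ((s, x') : ℝ × V3) := by
      refine (hasFDerivAt_const (0:ℝ) _).prodMk ?_
      have h := (hKder x').comp ((s, x') : ℝ × V3) (hasFDerivAt_snd (𝕜 := ℝ) (p := ((s, x') : ℝ × V3)))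
      simpa [Function.comp] using h
    have hc : HasFDerivAt (fun q : ℝ × V3 => fderiv ℝ K q.2)
        ((0 : V3 →L[ℝ] V3 →L[ℝ] V3).comp (ContinuousLinearMap.snd ℝ ℝ V3)) ((s, x') : ℝ × V3) := by
      have h := (hDK0 x').comp ((s, x') : ℝ × V3) (hasFDerivAt_snd (𝕜 := ℝ) (p := ((s, x') : ℝ × V3)))
      simpa [Function.comp_def] using h
    have hT1 := hS.clm_apply hm
    have hT2 := hc.clm_apply hFd
    have hΦ := hT1.sub hT2
    have hΦev : (fun q : ℝ × V3 => fderiv ℝ F q ((0:ℝ), K q.2) - fderiv ℝ K q.2 (F q))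
        =ᶠ[nhds ((s, x') : ℝ × V3)] (fun _ => (0 : V3)) := by
      filter_upwards [hUopen.mem_nhds (show ((s, x') : ℝ × V3) ∈ I ×ˢ univ from ⟨hs, trivial⟩)]
        with q hq
      obtain ⟨q1, q2⟩ := q
      have hb := haxi q1 hq.1 q2
      unfold bracket3 at hb
      have hx := hux q1 hq.1 q2 (K q2)
      simp only at hx ⊢
      rw [← hx]
      exact hb
    have hΦ0 : HasFDerivAt (fun q : ℝ × V3 => fderiv ℝ F q ((0:ℝ), K q.2) - fderiv ℝ K q.2 (F q))
        (0 : (ℝ × V3) →L[ℝ] V3) ((s, x') : ℝ × V3) :=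
      (hasFDerivAt_const (0 : V3) _).congr_of_eventuallyEq hΦev
    have huniq := hΦ.unique hΦ0
    have hI1 : fderiv ℝ F ((s, x') : ℝ × V3) ((0:ℝ), fderiv ℝ K x' (u s x'))
        + S ((1:ℝ), u s x') ((0:ℝ), K x')
        = fderiv ℝ K x' (fderiv ℝ F ((s, x') : ℝ × V3) ((1:ℝ), u s x')) := by
      have h := congrArg (fun L : (ℝ × V3) →L[ℝ] V3 => L ((1:ℝ), u s x')) huniq
      simp only [ContinuousLinearMap.sub_apply, ContinuousLinearMap.add_apply,
        ContinuousLinearMap.comp_apply, ContinuousLinearMap.flip_apply,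
        ContinuousLinearMap.prod_apply, ContinuousLinearMap.zero_apply,
        ContinuousLinearMap.coe_snd', Function.comp, ContinuousLinearMap.coe_zero,
        Pi.zero_apply, map_zero] at h
      rw [sub_eq_zero] at h
      rw [add_zero] at h
      exact h
    -- derivative of the acceleration field a(y) = DF(s,y)(1, u s y)
    have hc2 : HasFDerivAt (fun y : V3 => fderiv ℝ F (s, y))
        (S.comp ((0 : V3 →L[ℝ] ℝ).prod (ContinuousLinearMap.id ℝ V3))) x' := by
      have h := hS.comp x' (hι s x')
      simpa [Function.comp_def] using h
    have hm2 : HasFDerivAt (fun y : V3 => (((1:ℝ), u s y) : ℝ × V3))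
        ((0 : V3 →L[ℝ] ℝ).prod ((fderiv ℝ F ((s, x') : ℝ × V3)).comp
          ((0 : V3 →L[ℝ] ℝ).prod (ContinuousLinearMap.id ℝ V3)))) x' :=
      (hasFDerivAt_const (1:ℝ) x').prodMk (hUder s hs x')
    have ha := hc2.clm_apply hm2
    -- value of the derivative of a in direction K x'
    have hbrx : fderiv ℝ F ((s, x') : ℝ × V3) ((0:ℝ), K x') = fderiv ℝ K x' (u s x') := by
      have hb := haxi s hs x'
      unfold bracket3 at hb
      have hx := hux s hs x' (K x')
      rw [← hx]
      rw [sub_eq_zero] at hb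
      exact hb
    have hAK : ((fderiv ℝ F ((s, x') : ℝ × V3)).comp
          ((0 : V3 →L[ℝ] ℝ).prod ((fderiv ℝ F ((s, x') : ℝ × V3)).comp
            ((0 : V3 →L[ℝ] ℝ).prod (ContinuousLinearMap.id ℝ V3))))
        + (S.comp ((0 : V3 →L[ℝ] ℝ).prod (ContinuousLinearMap.id ℝ V3))).flip
            (((1:ℝ), u s x') : ℝ × V3)) (K x')
        = fderiv ℝ K x' (fderiv ℝ F ((s, x') : ℝ × V3) ((1:ℝ), u s x')) := by
      simp only [ContinuousLinearMap.add_apply, ContinuousLinearMap.comp_apply,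
        ContinuousLinearMap.flip_apply, ContinuousLinearMap.prod_apply,
        ContinuousLinearMap.zero_apply, ContinuousLinearMap.id_apply]
      rw [hbrx, hSsymm]
      exact hI1
    -- pressure Hessian
    have hPy : ContDiffAt ℝ ((⊤:ℕ∞) : WithTop ℕ∞) (p s) x' := by
      have hq : ContDiffAt ℝ ((⊤:ℕ∞) : WithTop ℕ∞) (fun q : ℝ × V3 => p q.1 q.2)
          ((s, x') : ℝ × V3) := hp.contDiffAt (hUopen.mem_nhds ⟨hs, trivial⟩)
      have hι' : ContDiffAt ℝ ((⊤:ℕ∞) : WithTop ℕ∞) (fun z : V3 => ((s, z) : ℝ × V3)) x' :=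
        (contDiffAt_const (c := s)).prodMk contDiffAt_id
      have h := hq.comp x' hι'
      simpa [Function.comp_def] using h
    have hHP : HasFDerivAt (fderiv ℝ (p s)) (fderiv ℝ (fderiv ℝ (p s)) x') x' :=
      ((hPy.fderiv_right coe11top).differentiableAt one_ne_zero).hasFDerivAt
    set HP := fderiv ℝ (fderiv ℝ (p s)) x' with hHPdef
    have hPsymm : ∀ a b, HP a b = HP b a := hPy.isSymmSndFDerivAt (by rw [minSmoothness_of_isRCLikeNormedField]; exact coe2top)
    have hGi : ∀ i : Fin 3, HasFDerivAt (fun y => fderiv ℝ (p s) y (Pi.single i 1))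
        ((fderiv ℝ (p s) x').comp (0 : V3 →L[ℝ] V3) + HP.flip (Pi.single i 1)) x' := fun i =>
      hHP.clm_apply (hasFDerivAt_const (Pi.single i 1) x')
    have hG : HasFDerivAt (fun y => grad3 (p s) y)
        (ContinuousLinearMap.pi (fun i : Fin 3 =>
          (fderiv ℝ (p s) x').comp (0 : V3 →L[ℝ] V3) + HP.flip (Pi.single i 1))) x' := by
      have h := hasFDerivAt_pi.2 hGi
      exact h
    set G' := ContinuousLinearMap.pi (fun i : Fin 3 =>
        (fderiv ℝ (p s) x').comp (0 : V3 →L[ℝ] V3) + HP.flip (Pi.single i 1)) with hG'def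
    have hG'app : ∀ v w : V3, dot3 (G' v) w = HP v w := by
      intro v w
      have h1 : dot3 (G' v) w = ∑ i, w i * (HP v) (Pi.single i 1) := by
        simp [hG'def, dot3, ContinuousLinearMap.pi_apply, mul_comm]
      rw [h1, clm_expand (HP v) w]
      simp only [smul_eq_mul]
    -- uniqueness : G' = - (derivative of a)
    have hnegA : HasFDerivAt (fun y => grad3 (p s) y)
        (-((fderiv ℝ F ((s, x') : ℝ × V3)).comp
          ((0 : V3 →L[ℝ] ℝ).prod ((fderiv ℝ F ((s, x') : ℝ × V3)).comp
            ((0 : V3 →L[ℝ] ℝ).prod (ContinuousLinearMap.id ℝ V3))))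
        + (S.comp ((0 : V3 →L[ℝ] ℝ).prod (ContinuousLinearMap.id ℝ V3))).flip
            (((1:ℝ), u s x') : ℝ × V3))) x' := by
      have h := ha.fun_neg
      have heq : (fun y : V3 => -(fderiv ℝ F (s, y) ((1:ℝ), u s y))) = fun y => grad3 (p s) y :=
        funext fun y => (heul y).symm
      rw [heq] at h
      exact h
    have hG'eq := hG.unique hnegA
    -- assemble
    have hd := hasFDerivAt_dot3 hG (hKder x')
    have hzero : (∑ i : Fin 3, (((fun y => grad3 (p s) y) x' i) •
          ((proj i : V3 →L[ℝ] ℝ).comp (fderiv ℝ K x'))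
        + (K x' i) • ((proj i : V3 →L[ℝ] ℝ).comp G'))) = (0 : V3 →L[ℝ] ℝ) := by
      refine ContinuousLinearMap.ext fun v => ?_
      rw [dot3_deriv_apply' (grad3 (p s) x') (K x') G' (fderiv ℝ K x') v]
      have e1 : dot3 (G' v) (K x') = dot3 (G' (K x')) v := by
        rw [hG'app, hG'app, hPsymm]
      have e2 : dot3 (G' (K x')) v
          = - dot3 (fderiv ℝ K x' (fderiv ℝ F ((s, x') : ℝ × V3) ((1:ℝ), u s x'))) v := by
        have hval : G' (K x')
            = -(fderiv ℝ K x' (fderiv ℝ F ((s, x') : ℝ × V3) ((1:ℝ), u s x'))) := by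
          rw [hG'eq]
          simp only [ContinuousLinearMap.neg_apply]
          rw [hAK]
        rw [hval, dot3_neg_left]
      have e3 : dot3 (grad3 (p s) x') (fderiv ℝ K x' v)
          = dot3 (fderiv ℝ K x' (fderiv ℝ F ((s, x') : ℝ × V3) ((1:ℝ), u s x'))) v := by
        rw [heul x', dot3_neg_left]
        rw [killing_dot K hKill x' (fderiv ℝ F ((s, x') : ℝ × V3) ((1:ℝ), u s x')) v]
      simp only [ContinuousLinearMap.zero_apply]
      rw [e1, e2, e3]
      ring
    rw [hzero] at hd
    exact hd
  -- conclude : constant with decay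
  have hgconst : ∀ y z : V3,
      dot3 (grad3 (p s) y) (K y) = dot3 (grad3 (p s) z) (K z) := fun y z =>
    is_const_of_fderiv_eq_zero (𝕜 := ℝ) (fun w => (hg0 w).differentiableAt)
      (fun w => (hg0 w).fderiv) y z
  intro y
  have hd := hdecay s hs
  have hfun : (fun z : V3 => dot3 (grad3 (p s) z) (K z))
      = fun _ => dot3 (grad3 (p s) y) (K y) := funext fun z => hgconst z y
  rw [hfun] at hd
  exact tendsto_nhds_unique tendsto_const_nhds hd

/-- for a Killing field K and a smooth axisymmetric Euler solution (u,p)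
whose quantity ⟨∇ₓp, K⟩ decays at infinity, the swirl ⟨u, K⟩ is transported by the
flow γ of u: ⟨u(t,γ(t,x)), K(γ(t,x))⟩ = ⟨u(0,x), K(x)⟩. -/
theorem swirl_transported_by_flow (I : Set ℝ) (hIopen : IsOpen I) (hI0 : (0:ℝ) ∈ I)
    (hIconn : I.OrdConnected)
    (K : V3 → V3) (hKsmooth : ContDiff ℝ (⊤ : ℕ∞) K)
    (hKill : IsKillingOn K Set.univ)
    (u : ℝ → V3 → V3) (p : ℝ → V3 → ℝ)
    (hu : ContDiffOn ℝ (⊤ : ℕ∞) (fun q : ℝ × V3 => u q.1 q.2) (I ×ˢ (Set.univ : Set V3)))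
    (hp : ContDiffOn ℝ (⊤ : ℕ∞) (fun q : ℝ × V3 => p q.1 q.2) (I ×ˢ (Set.univ : Set V3)))
    (heuler : IsEulerSolution I u p)
    (haxi : ∀ t ∈ I, ∀ x : V3, bracket3 K (u t) x = 0)
    (hdecay : ∀ t ∈ I,
      Filter.Tendsto (fun x : V3 => dot3 (grad3 (p t) x) (K x))
        (Filter.cocompact V3) (nhds 0))
    (γ : ℝ → V3 → V3)
    (hflow : ∀ t ∈ I, ∀ x : V3, HasDerivAt (fun s => γ s x) (u t (γ t x)) t)
    (hflow0 : ∀ x : V3, γ 0 x = x) :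
    ∀ t ∈ I, ∀ x : V3,
      dot3 (u t (γ t x)) (K (γ t x)) = dot3 (u 0 x) (K x) := by
  intro t ht x
  set F : ℝ × V3 → V3 := fun q => u q.1 q.2 with hFdef
  have hUopen : IsOpen (I ×ˢ (univ : Set V3)) := hIopen.prod isOpen_univ
  have hFq : ∀ q : ℝ × V3, q.1 ∈ I → ContDiffAt ℝ ((⊤:ℕ∞) : WithTop ℕ∞) F q := fun q hq =>
    hu.contDiffAt (hUopen.mem_nhds ⟨hq, trivial⟩)
  have hKder : ∀ y, HasFDerivAt K (fderiv ℝ K y) y := fun y =>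
    ((hKsmooth.differentiable (by simp)) y).hasFDerivAt
  have hι : ∀ (r : ℝ) (y : V3), HasFDerivAt (fun z : V3 => ((r, z) : ℝ × V3))
      ((0 : V3 →L[ℝ] ℝ).prod (ContinuousLinearMap.id ℝ V3)) y := fun r y =>
    (hasFDerivAt_const r y).prodMk (hasFDerivAt_id y)
  have hUder : ∀ r ∈ I, ∀ y : V3, HasFDerivAt (u r)
      ((fderiv ℝ F (r, y)).comp ((0 : V3 →L[ℝ] ℝ).prod (ContinuousLinearMap.id ℝ V3))) y := by
    intro r hr y
    have h := (((hFq (r, y) hr).differentiableAt (by simp)).hasFDerivAt).comp y (hι r y)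
    simpa [Function.comp] using h
  have hux : ∀ r ∈ I, ∀ (y v : V3), fderiv ℝ (u r) y v = fderiv ℝ F (r, y) (0, v) := by
    intro r hr y v
    rw [(hUder r hr y).fderiv]
    simp
  have hder_t : ∀ r ∈ I, ∀ y : V3, HasDerivAt (fun r' => u r' y) (fderiv ℝ F (r, y) (1, 0)) r := by
    intro r hr y
    have h := ((hFq (r, y) hr).differentiableAt (by simp)).hasFDerivAt.comp_hasDerivAt r
      ((hasDerivAt_id r).prodMk (hasDerivAt_const r y))
    simpa [Function.comp_def] using h
  have heul : ∀ r ∈ I, ∀ y : V3, grad3 (p r) y = -(fderiv ℝ F (r, y) ((1:ℝ), u r y)) := by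
    intro r hr y
    have h := heuler.1 r hr y
    rw [(hder_t r hr y).deriv, hux r hr y (u r y)] at h
    have hsum : fderiv ℝ F (r, y) ((1:ℝ), (0:V3)) + fderiv ℝ F (r, y) ((0:ℝ), u r y)
        = fderiv ℝ F (r, y) ((1:ℝ), u r y) := by
      rw [← ContinuousLinearMap.map_add]
      norm_num
    rw [hsum] at h
    rw [h, neg_neg]
  have hgzero := grad_p_swirl_zero I hIopen K hKsmooth hKill u p hu hp heuler haxi hdecay
  have hkey : ∀ s ∈ I, HasDerivAt (fun r => dot3 (u r (γ r x)) (K (γ r x))) 0 s := by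
    intro s hs
    have hγ := hflow s hs x
    have hcurve : HasDerivAt (fun r => ((r, γ r x) : ℝ × V3)) (((1 : ℝ), u s (γ s x)) : ℝ × V3) s :=
      (hasDerivAt_id s).prodMk hγ
    have hFd : HasFDerivAt F (fderiv ℝ F (s, γ s x)) ((s, γ s x) : ℝ × V3) :=
      ((hFq (s, γ s x) hs).differentiableAt (by simp)).hasFDerivAt
    have hA : HasDerivAt (fun r => F (r, γ r x))
        (fderiv ℝ F ((s, γ s x) : ℝ × V3) ((1:ℝ), u s (γ s x))) s := by
      have h := hFd.comp_hasDerivAt s hcurve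
      simpa [Function.comp_def] using h
    have hB : HasDerivAt (fun r => K (γ r x)) (fderiv ℝ K (γ s x) (u s (γ s x))) s := by
      have h := (hKder (γ s x)).comp_hasDerivAt s hγ
      simpa [Function.comp_def] using h
    have hd := hasDerivAt_dot3 hA hB
    have hv1 : dot3 (fderiv ℝ F ((s, γ s x) : ℝ × V3) ((1:ℝ), u s (γ s x))) (K (γ s x)) = 0 := by
      have he : fderiv ℝ F ((s, γ s x) : ℝ × V3) ((1:ℝ), u s (γ s x))
          = -grad3 (p s) (γ s x) := by
        rw [heul s hs (γ s x), neg_neg]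
      rw [he, dot3_neg_left, hgzero s hs (γ s x), neg_zero]
    have hv2 : dot3 (u s (γ s x)) (fderiv ℝ K (γ s x) (u s (γ s x))) = 0 := by
      have h := hKill (γ s x) (mem_univ _) (u s (γ s x)) (u s (γ s x))
      have hc := dot3_comm (fderiv ℝ K (γ s x) (u s (γ s x))) (u s (γ s x))
      linarith
    have hval : dot3 (fderiv ℝ F ((s, γ s x) : ℝ × V3) ((1:ℝ), u s (γ s x)))
          (K (γ s x))
        + dot3 (F ((s, γ s x) : ℝ × V3)) (fderiv ℝ K (γ s x) (u s (γ s x))) = 0 := by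
      rw [hv1]
      simpa using hv2
    rw [hval] at hd
    exact hd
  have hconv : Convex ℝ I := convex_iff_ordConnected.mpr hIconn
  have hdiff : DifferentiableOn ℝ (fun r => dot3 (u r (γ r x)) (K (γ r x))) I :=
    fun s hs => ((hkey s hs).differentiableAt).differentiableWithinAt
  have hzero : ∀ s ∈ I, fderivWithin ℝ (fun r => dot3 (u r (γ r x)) (K (γ r x))) I s = 0 := by
    intro s hs
    rw [fderivWithin_of_isOpen hIopen hs]
    rw [((hkey s hs).hasFDerivAt).fderiv]
    exact ContinuousLinearMap.ext fun v => by simp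
  have hval := hconv.is_const_of_fderivWithin_eq_zero hdiff hzero ht hI0
  simpa [hflow0 x] using hval
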